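/- Let n > 3. The Poisson algebra P₁,₅ⁿ degenerates to the Poisson algebra P₁,₄ⁿ: there exists a family g(t), t ∈ ℂ∖{0}, of invertible linear maps of ℂⁿ such that for all x, y ∈ ℂⁿ, g(t)(μ(g(t)⁻¹x, g(t)⁻¹y)) → λ(x,y) and g(t)(μ'(g(t)⁻¹x, g(t)⁻¹y)) → λ'(x,y) as t → 0 (in the standard topology of ℂⁿ), where (μ, μ') are the multiplication and bracket of P₁,₅ⁿ and (λ, λ') those of P₁,₄ⁿ. -/

import Mathlib

open scoped BigOperators

/-- The bilinear map on `Fin n → ℂ` determined by structure constants `c`. -/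
noncomputable def sb {n : ℕ} (c : Fin n → Fin n → Fin n → ℂ) :
    (Fin n → ℂ) →ₗ[ℂ] (Fin n → ℂ) →ₗ[ℂ] (Fin n → ℂ) :=
  LinearMap.mk₂ ℂ (fun x y k => ∑ a, ∑ b, c a b k * (x a * y b))
    (fun x x' y => by
      funext k
      simp [add_mul, mul_add, Finset.sum_add_distrib])
    (fun r x y => by
      funext k
      simp only [Pi.smul_apply, smul_eq_mul, Finset.mul_sum]
      exact Finset.sum_congr rfl fun a _ => Finset.sum_congr rfl fun b _ => by ring)
    (fun x y y' => by
      funext k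
      simp [mul_add, Finset.sum_add_distrib])
    (fun r x y => by
      funext k
      simp only [Pi.smul_apply, smul_eq_mul, Finset.mul_sum]
      exact Finset.sum_congr rfl fun a _ => Finset.sum_congr rfl fun b _ => by ring)

/-- Multiplication of `P₁,₄ⁿ` and `P₁,₅ⁿ`: `e_i · e_j = e_{i+j}` for
`2 ≤ i+j ≤ n−1`, `i,j ≤ n−1`, together with `eₙ·eₙ = e_{n−1}`. -/
noncomputable def mu12 (n : ℕ) : (Fin n → ℂ) →ₗ[ℂ] (Fin n → ℂ) →ₗ[ℂ] (Fin n → ℂ) :=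
  sb (fun a b k =>
    (if (a : ℕ) + (b : ℕ) + 1 = (k : ℕ) ∧ (k : ℕ) + 2 ≤ n then 1 else 0) +
    (if (a : ℕ) + 1 = n ∧ (b : ℕ) + 1 = n ∧ (k : ℕ) + 2 = n then 1 else 0))

/-- The bracket of `P₁,₅ⁿ`: `{e₁,eₙ} = e_{n−1}`. -/
noncomputable def brB (n : ℕ) : (Fin n → ℂ) →ₗ[ℂ] (Fin n → ℂ) →ₗ[ℂ] (Fin n → ℂ) :=
  sb (fun a b k =>
    if (a : ℕ) = 0 ∧ (b : ℕ) + 1 = n ∧ (k : ℕ) + 2 = n then 1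
    else if (a : ℕ) + 1 = n ∧ (b : ℕ) = 0 ∧ (k : ℕ) + 2 = n then -1 else 0)


/-- Weight exponents: `n-1` for the last basis vector, `2(m+1)` otherwise. -/
def wexp (n m : ℕ) : ℕ := if m + 1 = n then n - 1 else 2 * (m + 1)

/-- Diagonal linear equivalence with entries `u`. -/
noncomputable def dE {n : ℕ} (u : Fin n → ℂ) (hu : ∀ i, u i ≠ 0) :
    (Fin n → ℂ) ≃ₗ[ℂ] (Fin n → ℂ) where
  toFun x := fun i => u i * x i
  invFun x := fun i => (u i)⁻¹ * x i
  map_add' x y := by funext i; simp [mul_add]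
  map_smul' r x := by funext i; simp only [Pi.smul_apply, smul_eq_mul, RingHom.id_apply]; ring
  left_inv x := by funext i; exact inv_mul_cancel_left₀ (hu i) (x i)
  right_inv x := by funext i; exact mul_inv_cancel_left₀ (hu i) (x i)

open Classical in
noncomputable def gmap (n : ℕ) (t : ℂ) : (Fin n → ℂ) ≃ₗ[ℂ] (Fin n → ℂ) :=
  if ht : t = 0 then LinearEquiv.refl ℂ _
  else dE (fun i => t ^ wexp n (i : ℕ)) (fun _ => pow_ne_zero _ ht)

lemma key {n : ℕ} (c : Fin n → Fin n → Fin n → ℂ) (u : Fin n → ℂ) (hu : ∀ i, u i ≠ 0)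
    (s : ℂ) (h : ∀ a b k, u k * c a b k = s * (u a * u b * c a b k))
    (x y : Fin n → ℂ) (k : Fin n) :
    u k * (sb c (fun a => (u a)⁻¹ * x a) (fun b => (u b)⁻¹ * y b) k)
      = s * sb c x y k := by
  simp only [sb, LinearMap.mk₂_apply]
  rw [Finset.mul_sum, Finset.mul_sum]
  refine Finset.sum_congr rfl fun a _ => ?_
  rw [Finset.mul_sum, Finset.mul_sum]
  refine Finset.sum_congr rfl fun b _ => ?_
  have hua := hu a
  have hub := hu b
  have h1 : u k * (c a b k * ((u a)⁻¹ * x a * ((u b)⁻¹ * y b)))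
      = (u k * c a b k) * ((u a)⁻¹ * (u b)⁻¹ * (x a * y b)) := by ring
  rw [h1, h a b k]
  field_simp

lemma hmu_scale {n : ℕ} (hn : 3 < n) (t : ℂ) (a b k : Fin n) :
    t ^ wexp n (k : ℕ) *
      ((if (a : ℕ) + (b : ℕ) + 1 = (k : ℕ) ∧ (k : ℕ) + 2 ≤ n then 1 else 0) +
        (if (a : ℕ) + 1 = n ∧ (b : ℕ) + 1 = n ∧ (k : ℕ) + 2 = n then 1 else 0))
    = 1 * (t ^ wexp n (a : ℕ) * t ^ wexp n (b : ℕ) *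
      ((if (a : ℕ) + (b : ℕ) + 1 = (k : ℕ) ∧ (k : ℕ) + 2 ≤ n then 1 else 0) +
        (if (a : ℕ) + 1 = n ∧ (b : ℕ) + 1 = n ∧ (k : ℕ) + 2 = n then 1 else 0))) := by
  by_cases h1 : (a : ℕ) + (b : ℕ) + 1 = (k : ℕ) ∧ (k : ℕ) + 2 ≤ n
  · obtain ⟨h1a, h1b⟩ := h1
    have h2 : ¬((a : ℕ) + 1 = n ∧ (b : ℕ) + 1 = n ∧ (k : ℕ) + 2 = n) := by omega
    rw [if_pos ⟨h1a, h1b⟩, if_neg h2]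
    have hk : wexp n (k : ℕ) = wexp n (a : ℕ) + wexp n (b : ℕ) := by
      unfold wexp; split_ifs <;> omega
    rw [hk, pow_add]; ring
  · by_cases h2 : (a : ℕ) + 1 = n ∧ (b : ℕ) + 1 = n ∧ (k : ℕ) + 2 = n
    · rw [if_neg h1, if_pos h2]
      obtain ⟨h2a, h2b, h2c⟩ := h2
      have hk : wexp n (k : ℕ) = wexp n (a : ℕ) + wexp n (b : ℕ) := by
        unfold wexp; split_ifs <;> omega
      rw [hk, pow_add]; ring
    · rw [if_neg h1, if_neg h2]; ring

lemma hbr_scale {n : ℕ} (hn : 3 < n) (t : ℂ) (a b k : Fin n) :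
    t ^ wexp n (k : ℕ) *
      (if (a : ℕ) = 0 ∧ (b : ℕ) + 1 = n ∧ (k : ℕ) + 2 = n then 1
        else if (a : ℕ) + 1 = n ∧ (b : ℕ) = 0 ∧ (k : ℕ) + 2 = n then -1 else 0)
    = t ^ (n - 3) * (t ^ wexp n (a : ℕ) * t ^ wexp n (b : ℕ) *
      (if (a : ℕ) = 0 ∧ (b : ℕ) + 1 = n ∧ (k : ℕ) + 2 = n then 1
        else if (a : ℕ) + 1 = n ∧ (b : ℕ) = 0 ∧ (k : ℕ) + 2 = n then -1 else 0)) := by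
  by_cases h1 : (a : ℕ) = 0 ∧ (b : ℕ) + 1 = n ∧ (k : ℕ) + 2 = n
  · rw [if_pos h1]
    obtain ⟨ha, hb, hk0⟩ := h1
    have hk : wexp n (k : ℕ) = (n - 3) + (wexp n (a : ℕ) + wexp n (b : ℕ)) := by
      unfold wexp; split_ifs <;> omega
    rw [hk, pow_add, pow_add]; ring
  · by_cases h2 : (a : ℕ) + 1 = n ∧ (b : ℕ) = 0 ∧ (k : ℕ) + 2 = n
    · rw [if_neg h1, if_pos h2]
      obtain ⟨ha, hb, hk0⟩ := h2
      have hk : wexp n (k : ℕ) = (n - 3) + (wexp n (a : ℕ) + wexp n (b : ℕ)) := by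
        unfold wexp; split_ifs <;> omega
      rw [hk, pow_add, pow_add]; ring
    · rw [if_neg h1, if_neg h2]; ring

/-- For n > 3, the Poisson algebra `P₁,₅ⁿ` degenerates to `P₁,₄ⁿ`
(same multiplication, zero bracket). -/
theorem stmt16 (n : ℕ) (hn : 3 < n) :
    ∃ g : ℂ → ((Fin n → ℂ) ≃ₗ[ℂ] (Fin n → ℂ)), ∀ x y : Fin n → ℂ,
      Filter.Tendsto (fun t : ℂ => g t (mu12 n ((g t).symm x) ((g t).symm y)))
        (nhdsWithin (0 : ℂ) {(0 : ℂ)}ᶜ) (nhds (mu12 n x y)) ∧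
      Filter.Tendsto (fun t : ℂ => g t (brB n ((g t).symm x) ((g t).symm y)))
        (nhdsWithin (0 : ℂ) {(0 : ℂ)}ᶜ) (nhds ((0 : (Fin n → ℂ) →ₗ[ℂ] (Fin n → ℂ) →ₗ[ℂ] (Fin n → ℂ)) x y)) := by
  classical
  refine ⟨gmap n, fun x y => ?_⟩
  have hu : ∀ (t : ℂ), t ≠ 0 → ∀ i : Fin n, (t ^ wexp n (i : ℕ)) ≠ 0 :=
    fun t ht _ => pow_ne_zero _ ht
  have hmu : ∀ t : ℂ, t ≠ 0 →
      gmap n t (mu12 n ((gmap n t).symm x) ((gmap n t).symm y)) = mu12 n x y := by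
    intro t ht
    simp only [gmap, dif_neg ht]
    funext k
    have := key (u := fun i : Fin n => t ^ wexp n (i : ℕ)) (hu := hu t ht)
      (c := fun a b k =>
        (if (a : ℕ) + (b : ℕ) + 1 = (k : ℕ) ∧ (k : ℕ) + 2 ≤ n then 1 else 0) +
        (if (a : ℕ) + 1 = n ∧ (b : ℕ) + 1 = n ∧ (k : ℕ) + 2 = n then 1 else 0))
      (s := 1) (fun a b k => hmu_scale hn t a b k) x y k
    rw [one_mul] at this
    exact this
  have hbr : ∀ t : ℂ, t ≠ 0 →
      gmap n t (brB n ((gmap n t).symm x) ((gmap n t).symm y))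
        = t ^ (n - 3) • brB n x y := by
    intro t ht
    simp only [gmap, dif_neg ht]
    funext k
    have := key (u := fun i : Fin n => t ^ wexp n (i : ℕ)) (hu := hu t ht)
      (c := fun a b k =>
        if (a : ℕ) = 0 ∧ (b : ℕ) + 1 = n ∧ (k : ℕ) + 2 = n then 1
        else if (a : ℕ) + 1 = n ∧ (b : ℕ) = 0 ∧ (k : ℕ) + 2 = n then -1 else 0)
      (s := t ^ (n - 3)) (fun a b k => hbr_scale hn t a b k) x y k
    exact this
  constructor
  · refine Filter.Tendsto.congr' ?_ tendsto_const_nhds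
    refine Filter.eventuallyEq_of_mem self_mem_nhdsWithin fun t ht => ?_
    have ht' : t ≠ 0 := ht
    exact (hmu t ht').symm
  · have h0 : Filter.Tendsto (fun t : ℂ => t ^ (n - 3) • brB n x y)
        (nhdsWithin (0 : ℂ) {(0 : ℂ)}ᶜ) (nhds 0) := by
      have hp : Filter.Tendsto (fun t : ℂ => t ^ (n - 3)) (nhdsWithin (0 : ℂ) {(0 : ℂ)}ᶜ)
          (nhds 0) := by
        have := ((continuous_pow (n - 3)).tendsto (0 : ℂ)).mono_left
          (nhdsWithin_le_nhds (s := {(0 : ℂ)}ᶜ))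
        simpa [zero_pow (show n - 3 ≠ 0 by omega)] using this
      simpa using hp.smul_const (brB n x y)
    simp only [LinearMap.zero_apply]
    refine Filter.Tendsto.congr' ?_ h0
    refine Filter.eventuallyEq_of_mem self_mem_nhdsWithin fun t ht => ?_
    have ht' : t ≠ 0 := ht
    exact (hbr t ht').symm
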